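/- Let F_q be a finite field and f1,...,fn ∈ F_q[x1,...,xn] algebraically dependent with minimal annihilator degree at most D. For an extension F_{q'} and any integer k > 0, the number of points a ∈ F_{q'}^n such that the fiber f^{−1}(f(a)) ⊆ F_{q'}^n has size at most k is at most k·D·q'^{n−1}. -/

import Mathlib

open MvPolynomial

open Finset in
lemma sz_mul_card {K : Type*} [Field K] [Fintype K] [DecidableEq K] :
    ∀ (n : ℕ) (P : MvPolynomial (Fin n) K), P ≠ 0 →
      (Finset.univ.filter fun x : Fin n → K => eval x P = 0).card * Fintype.card K ≤
        P.totalDegree * Fintype.card K ^ n := by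
  intro n
  induction n with
  | zero =>
    intro P hP
    obtain ⟨c, rfl⟩ : ∃ c, P = C c := ⟨P.coeff 0, (eq_C_of_isEmpty P)⟩
    have hc : c ≠ 0 := fun h => hP (by simp [h])
    have h0 : (Finset.univ.filter fun x : Fin 0 → K => eval x (C c) = 0) = ∅ := by
      apply Finset.filter_eq_empty_iff.mpr
      intro x _
      simpa using hc
    simp [h0, hc]
  | succ n ih =>
    intro P hP
    set q := Fintype.card K with hq
    set P' := finSuccEquiv K n P with hP'def
    have hP' : P' ≠ 0 := by
      simp only [hP'def, ne_eq, EmbeddingLike.map_eq_zero_iff]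
      exact hP
    set d := P'.natDegree with hd
    set L := P'.leadingCoeff with hL
    have hL0 : L ≠ 0 := Polynomial.leadingCoeff_ne_zero.mpr hP'
    have hLd : L.totalDegree + d ≤ P.totalDegree := by
      apply totalDegree_coeff_finSuccEquiv_add_le P d
      rw [← Polynomial.leadingCoeff]
      exact hL0
    set B : Finset (Fin n → K) := Finset.univ.filter fun s => eval s L = 0 with hB
    have hBcard : B.card * q ≤ L.totalDegree * q ^ n := ih L hL0
    -- zeros as pairs
    set Z' : Finset (K × (Fin n → K)) :=
      Finset.univ.filter fun p => eval (Fin.cons p.1 p.2) P = 0 with hZ'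
    have hZcard : (Finset.univ.filter
        fun x : Fin (n+1) → K => eval x P = 0).card = Z'.card := by
      apply Finset.card_bij (fun x _ => (x 0, Fin.tail x))
      · intro x hx
        simp only [hZ', Finset.mem_filter, Finset.mem_univ, true_and] at hx ⊢
        rwa [Fin.cons_self_tail]
      · intro x hx y hy hxy
        have h1 : x 0 = y 0 := congrArg Prod.fst hxy
        have h2 : Fin.tail x = Fin.tail y := congrArg Prod.snd hxy
        funext i
        induction i using Fin.cases with
        | zero => exact h1
        | succ j => exact congrFun h2 j
      · intro p hp
        refine ⟨Fin.cons p.1 p.2, ?_, ?_⟩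
        · simp only [hZ', Finset.mem_filter, Finset.mem_univ, true_and] at hp ⊢
          exact hp
        · simp [Fin.tail_cons]
    have hfib : Z'.card ≤ B.card * q + d * q ^ n := by
      rw [Finset.card_eq_sum_card_fiberwise (f := Prod.snd) (t := Finset.univ)
        (fun p _ => Finset.mem_univ _)]
      have hbound : ∀ s : Fin n → K,
          (Z'.filter fun p => p.2 = s).card ≤ if s ∈ B then q else d := by
        intro s
        by_cases hs : s ∈ B
        · rw [if_pos hs, hq]
          apply Finset.card_le_card_of_injOn (fun p => p.1) (fun _ _ => Finset.mem_univ _)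
          intro p hp r hr hpr
          simp only [Finset.mem_coe, Finset.mem_filter] at hp hr
          exact Prod.ext hpr (hp.2.trans hr.2.symm)
        · rw [if_neg hs]
          simp only [hB, Finset.mem_filter, Finset.mem_univ, true_and] at hs
          set ps : Polynomial K := P'.map (eval s) with hps
          have hps0 : ps ≠ 0 := by
            intro h
            apply hs
            have : ps.coeff d = 0 := by rw [h]; simp
            rwa [hps, Polynomial.coeff_map, ← Polynomial.leadingCoeff, ← hL] at this
          have hpsd : ps.natDegree ≤ d := Polynomial.natDegree_map_le
          calc (Z'.filter fun p => p.2 = s).card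
              ≤ ps.roots.toFinset.card := by
                apply Finset.card_le_card_of_injOn (fun p => p.1)
                · intro p hp
                  replace hp : p ∈ Z'.filter (fun p => p.2 = s) := hp
                  show p.1 ∈ ps.roots.toFinset
                  simp only [hZ', Finset.mem_filter, Finset.mem_univ, true_and] at hp
                  obtain ⟨hp1, hp2⟩ := hp
                  subst hp2
                  rw [eval_eq_eval_mv_eval'] at hp1
                  simp only [Multiset.mem_toFinset, Polynomial.mem_roots hps0]
                  exact hp1
                · intro p hp r hr hpr
                  simp only [Finset.mem_coe, Finset.mem_filter] at hp hr
                  exact Prod.ext hpr (hp.2.trans hr.2.symm)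
            _ ≤ ps.roots.card := ps.roots.toFinset_card_le
            _ ≤ ps.natDegree := Polynomial.card_roots' ps
            _ ≤ d := hpsd
      calc ∑ s : Fin n → K, (Z'.filter fun p => p.2 = s).card
          ≤ ∑ s : Fin n → K, (if s ∈ B then q else d) := Finset.sum_le_sum fun s _ => hbound s
        _ = B.card * q + (Finset.univ.filter fun s => s ∉ B).card * d := by
            rw [Finset.sum_ite, Finset.sum_const, Finset.sum_const, smul_eq_mul, smul_eq_mul,
              Finset.filter_univ_mem]
        _ ≤ B.card * q + d * q ^ n := by
            apply Nat.add_le_add_left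
            rw [mul_comm]
            apply Nat.mul_le_mul_left
            calc (Finset.univ.filter fun s => s ∉ B).card
                ≤ (Finset.univ : Finset (Fin n → K)).card := Finset.card_filter_le _ _
              _ = q ^ n := by rw [Finset.card_univ, Fintype.card_fun, Fintype.card_fin]
    rw [hZcard]
    calc Z'.card * q ≤ (B.card * q + d * q ^ n) * q := Nat.mul_le_mul_right _ hfib
      _ = B.card * q * q + d * q ^ (n + 1) := by ring
      _ ≤ L.totalDegree * q ^ n * q + d * q ^ (n + 1) :=
          Nat.add_le_add_right (Nat.mul_le_mul_right _ hBcard) _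
      _ = (L.totalDegree + d) * q ^ (n + 1) := by ring
      _ ≤ P.totalDegree * q ^ (n + 1) := Nat.mul_le_mul_right _ hLd

theorem few_points_with_small_fibers {Fq K : Type*} [Field Fq] [Fintype Fq] [Field K]
    [Fintype K] [Algebra Fq K] {n : ℕ} (f : Fin n → MvPolynomial (Fin n) Fq) (D k : ℕ)
    (hk : 0 < k) (Q : MvPolynomial (Fin n) Fq) (hQ0 : Q ≠ 0) (hQd : Q.totalDegree ≤ D)
    (hann : aeval f Q = 0) :
    letI F : (Fin n → K) → (Fin n → K) :=
      fun a i => eval a ((f i).map (algebraMap Fq K))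
    {a : Fin n → K | {x : Fin n → K | F x = F a}.ncard ≤ k}.ncard ≤
      k * D * Fintype.card K ^ (n - 1) := by
  classical
  set φ := algebraMap Fq K with hφ
  set Fn : (Fin n → K) → (Fin n → K) := fun a i => eval a ((f i).map φ) with hFn
  show {a : Fin n → K | {x : Fin n → K | Fn x = Fn a}.ncard ≤ k}.ncard ≤
      k * D * Fintype.card K ^ (n - 1)
  set q := Fintype.card K with hq
  have hq0 : 0 < q := Fintype.card_pos
  -- Q has positive total degree, hence n ≥ 1 and D ≥ 1
  have hconst : ∀ c : Fq, Q = C c → False := by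
    intro c hc
    rw [hc, aeval_C] at hann
    have hc0 : c = 0 := (map_eq_zero_iff _ (algebraMap Fq _).injective).mp hann
    rw [hc, hc0, map_zero] at hQ0
    exact hQ0 rfl
  have hQdeg : 0 < Q.totalDegree := by
    rcases Nat.eq_zero_or_pos Q.totalDegree with h | h
    · exfalso
      obtain ⟨c, hc⟩ : ∃ c, Q = C c := by
        rw [totalDegree_eq_zero_iff] at h
        refine ⟨Q.coeff 0, ?_⟩
        ext m
        rcases eq_or_ne m 0 with rfl | hm
        · simp
        · rw [coeff_C, if_neg (Ne.symm hm)]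
          by_contra hcm
          obtain ⟨x, hx⟩ : ∃ x, m x ≠ 0 := by
            by_contra hall
            push_neg at hall
            exact hm (Finsupp.ext hall)
          exact hx (h m (mem_support_iff.mpr hcm) x)
      exact hconst c hc
    · exact h
  have hn : 1 ≤ n := by
    by_contra hn
    push_neg at hn
    interval_cases n
    exact hconst (Q.coeff 0) (eq_C_of_isEmpty Q)
  have hD : 1 ≤ D := le_trans hQdeg hQd
  -- the image polynomial
  set QK : MvPolynomial (Fin n) K := Q.map φ with hQK
  have hQK0 : QK ≠ 0 := fun h => hQ0 (MvPolynomial.map_injective φ (algebraMap Fq K).injective (by rw [map_zero]; exact h))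
  have hQKd : QK.totalDegree ≤ D := by
    refine le_trans ?_ hQd
    exact Finset.sup_mono (MvPolynomial.support_map_subset _ _)
  -- every image point is a zero of QK
  have himg : ∀ a : Fin n → K, eval (Fn a) QK = 0 := by
    intro a
    rw [hQK, eval_map]
    have : Fn a = fun i => eval₂ φ a (f i) := by
      funext i
      show eval a ((f i).map φ) = _
      rw [eval_map]
    rw [this, eval₂_assoc]
    have : eval₂ C f Q = aeval f Q := by
      rw [aeval_def, algebraMap_eq]
    rw [this, hann, eval₂_zero]
  -- counting
  set S : Finset (Fin n → K) :=
    Finset.univ.filter fun a => {x : Fin n → K | Fn x = Fn a}.ncard ≤ k with hS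
  have hlhs : {a : Fin n → K | {x : Fin n → K | Fn x = Fn a}.ncard ≤ k}.ncard = S.card := by
    rw [Set.ncard_eq_toFinset_card', Set.toFinset_setOf]
  rw [hlhs]
  have hfiber : ∀ b ∈ S.image Fn, (S.filter fun a => Fn a = b).card ≤ k := by
    intro b hb
    obtain ⟨a, ha, rfl⟩ := Finset.mem_image.mp hb
    simp only [hS, Finset.mem_filter, Finset.mem_univ, true_and] at ha
    calc (S.filter fun x => Fn x = Fn a).card
        ≤ (Finset.univ.filter fun x => Fn x = Fn a).card :=
          Finset.card_le_card (Finset.filter_subset_filter _ (Finset.subset_univ S))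
      _ = {x : Fin n → K | Fn x = Fn a}.ncard := by
          rw [Set.ncard_eq_toFinset_card', Set.toFinset_setOf]
      _ ≤ k := ha
  have himgcard : (S.image Fn).card ≤ D * q ^ (n - 1) := by
    have hsub : S.image Fn ⊆ Finset.univ.filter fun b => eval b QK = 0 := by
      intro b hb
      obtain ⟨a, _, rfl⟩ := Finset.mem_image.mp hb
      simp [himg a]
    have h1 : (S.image Fn).card * q ≤ D * q ^ n := by
      calc (S.image Fn).card * q
          ≤ (Finset.univ.filter fun b => eval b QK = 0).card * q :=
            Nat.mul_le_mul_right _ (Finset.card_le_card hsub)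
        _ ≤ QK.totalDegree * q ^ n := sz_mul_card n QK hQK0
        _ ≤ D * q ^ n := Nat.mul_le_mul_right _ hQKd
    have h2 : D * q ^ n = D * q ^ (n - 1) * q := by
      rw [mul_assoc, ← pow_succ, Nat.sub_add_cancel hn]
    exact Nat.le_of_mul_le_mul_right (by rw [← h2]; exact h1) hq0
  calc S.card ≤ k * (S.image Fn).card := Finset.card_le_mul_card_image S k hfiber
    _ ≤ k * (D * q ^ (n - 1)) := Nat.mul_le_mul_left _ himgcard
    _ = k * D * q ^ (n - 1) := by ring
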